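/- The number of permutations in S_n avoiding 1-2-34 and 2-1-3 equals the Fibonacci number F_{2n-1}, where F_1 = F_2 = 1. -/

import Mathlib

def Contains213 {n : ℕ} (π : Equiv.Perm (Fin n)) : Prop :=
  ∃ i j k : Fin n, i < j ∧ j < k ∧ π j < π i ∧ π i < π k

def Contains1'2'34 {n : ℕ} (π : Equiv.Perm (Fin n)) : Prop :=
  ∃ i j k k' : Fin n, i < j ∧ j < k ∧ (k' : ℕ) = (k : ℕ) + 1 ∧
    π i < π j ∧ π j < π k ∧ π k < π k'

namespace Stmt16

variable {n m : ℕ}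

/-- The insertion map: from σ on {0..m-1} build π on {0..n-1}:
π 0 = σ 0, π 1 = m, π p = n+1-p for 2 ≤ p ≤ n-m, π p = σ (p-(n-m)) for p > n-m. -/
def op2f (hm : 1 ≤ m) (hmn : m < n) (σ : Equiv.Perm (Fin m)) (p : Fin n) : Fin n :=
  if h0 : (p : ℕ) = 0 then ⟨σ ⟨0, hm⟩, lt_of_lt_of_le (σ ⟨0, hm⟩).isLt hmn.le⟩
  else if h1 : (p : ℕ) = 1 then ⟨m, hmn⟩
  else if h2 : (p : ℕ) ≤ n - m then ⟨n + 1 - p, by omega⟩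
  else ⟨σ ⟨p - (n - m), by have := p.isLt; omega⟩, lt_of_lt_of_le (σ _).isLt hmn.le⟩

lemma op2f_cases (hm : 1 ≤ m) (hmn : m < n) (σ : Equiv.Perm (Fin m)) (p : Fin n) :
    ((p : ℕ) = 0 ∧ (op2f hm hmn σ p : ℕ) = (σ ⟨0, hm⟩ : ℕ) ∧ (op2f hm hmn σ p : ℕ) < m) ∨
    ((p : ℕ) = 1 ∧ (op2f hm hmn σ p : ℕ) = m) ∨
    (2 ≤ (p : ℕ) ∧ (p : ℕ) ≤ n - m ∧ (op2f hm hmn σ p : ℕ) = n + 1 - p) ∨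
    (n - m < (p : ℕ) ∧ ∃ s : Fin m, 1 ≤ (s : ℕ) ∧ (s : ℕ) = (p : ℕ) - (n - m) ∧
      (op2f hm hmn σ p : ℕ) = (σ s : ℕ) ∧ (op2f hm hmn σ p : ℕ) < m) := by
  unfold op2f
  split_ifs with h0 h1 h2
  · exact Or.inl ⟨h0, rfl, (σ ⟨0, hm⟩).isLt⟩
  · exact Or.inr (Or.inl ⟨h1, rfl⟩)
  · exact Or.inr (Or.inr (Or.inl ⟨by omega, h2, rfl⟩))
  · have := p.isLt
    exact Or.inr (Or.inr (Or.inr ⟨by omega, ⟨(p : ℕ) - (n - m), by omega⟩,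
      show 1 ≤ (p : ℕ) - (n - m) by omega, rfl, rfl, (σ _).isLt⟩))

lemma op2f_inj (hm : 1 ≤ m) (hmn : m < n) (σ : Equiv.Perm (Fin m)) :
    Function.Injective (op2f hm hmn σ) := by
  intro p q hpq
  have hv : (op2f hm hmn σ p : ℕ) = (op2f hm hmn σ q : ℕ) := by rw [hpq]
  have hσlt : ∀ s : Fin m, (σ s : ℕ) < m := fun s => (σ s).isLt
  rcases op2f_cases hm hmn σ p with ⟨e1, e2, e3⟩ | ⟨e1, e2⟩ | ⟨e1, e1', e2⟩ | ⟨e1, s, hs1, hs2, e2, e3⟩ <;>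
    rcases op2f_cases hm hmn σ q with ⟨f1, f2, f3⟩ | ⟨f1, f2⟩ | ⟨f1, f1', f2⟩ | ⟨f1, t, ht1, ht2, f2, f3⟩ <;>
      apply Fin.ext
  all_goals try omega
  -- remaining: 0 vs tail (both σ values), tail vs 0, tail vs tail
  · -- p = 0, q tail
    exfalso
    have : (⟨0, hm⟩ : Fin m) = t := σ.injective (Fin.ext (by omega))
    have : (t : ℕ) = 0 := by rw [← this]
    omega
  · exfalso
    have : (⟨0, hm⟩ : Fin m) = s := σ.injective (Fin.ext (by omega))
    have : (s : ℕ) = 0 := by rw [← this]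
    omega
  · have : s = t := σ.injective (Fin.ext (by omega))
    have : (s : ℕ) = (t : ℕ) := by rw [this]
    omega

noncomputable def op2 (hm : 1 ≤ m) (hmn : m < n) (σ : Equiv.Perm (Fin m)) : Equiv.Perm (Fin n) :=
  Equiv.ofBijective _ (Finite.injective_iff_bijective.mp (op2f_inj hm hmn σ))

lemma op2_apply (hm : 1 ≤ m) (hmn : m < n) (σ : Equiv.Perm (Fin m)) (p : Fin n) :
    op2 hm hmn σ p = op2f hm hmn σ p := rfl

lemma op2_213_rev (hm : 1 ≤ m) (hmn : m < n) (σ : Equiv.Perm (Fin m)) :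
    Contains213 (op2 hm hmn σ) → Contains213 σ := by
  rintro ⟨i, j, k, hij, hjk, h1, h2⟩
  rw [Fin.lt_def] at hij hjk h1 h2
  simp only [op2_apply] at h1 h2
  rcases op2f_cases hm hmn σ i with ⟨e1, e2, e3⟩ | ⟨e1, e2⟩ | ⟨e1, e1', e2⟩ | ⟨e1, s, hs1, hs2, e2, e3⟩ <;>
    rcases op2f_cases hm hmn σ j with ⟨f1, f2, f3⟩ | ⟨f1, f2⟩ | ⟨f1, f1', f2⟩ | ⟨f1, t, ht1, ht2, f2, f3⟩ <;>
      rcases op2f_cases hm hmn σ k with ⟨g1, g2, g3⟩ | ⟨g1, g2⟩ | ⟨g1, g1', g2⟩ | ⟨g1, u, hu1, hu2, g2, g3⟩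
  all_goals try omega
  · -- i = 0, j tail, k tail
    exact ⟨⟨0, hm⟩, t, u, by simp only [Fin.lt_def, Fin.val_mk]; omega, by simp only [Fin.lt_def, Fin.val_mk]; omega,
      by simp only [Fin.lt_def, Fin.val_mk]; omega, by simp only [Fin.lt_def, Fin.val_mk]; omega⟩
  · -- all tail
    exact ⟨s, t, u, by simp only [Fin.lt_def, Fin.val_mk]; omega, by simp only [Fin.lt_def, Fin.val_mk]; omega,
      by simp only [Fin.lt_def, Fin.val_mk]; omega, by simp only [Fin.lt_def, Fin.val_mk]; omega⟩

lemma op2_1234_rev (hm : 1 ≤ m) (hmn : m < n) (σ : Equiv.Perm (Fin m)) :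
    Contains1'2'34 (op2 hm hmn σ) → Contains1'2'34 σ := by
  rintro ⟨i, j, k, k', hij, hjk, hkk, h1, h2, h3⟩
  rw [Fin.lt_def] at hij hjk h1 h2 h3
  simp only [op2_apply] at h1 h2 h3
  rcases op2f_cases hm hmn σ i with ⟨e1, e2, e3⟩ | ⟨e1, e2⟩ | ⟨e1, e1', e2⟩ | ⟨e1, s, hs1, hs2, e2, e3⟩ <;>
    rcases op2f_cases hm hmn σ j with ⟨f1, f2, f3⟩ | ⟨f1, f2⟩ | ⟨f1, f1', f2⟩ | ⟨f1, t, ht1, ht2, f2, f3⟩ <;>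
      rcases op2f_cases hm hmn σ k with ⟨g1, g2, g3⟩ | ⟨g1, g2⟩ | ⟨g1, g1', g2⟩ | ⟨g1, u, hu1, hu2, g2, g3⟩ <;>
        rcases op2f_cases hm hmn σ k' with ⟨d1, d2, d3⟩ | ⟨d1, d2⟩ | ⟨d1, d1', d2⟩ | ⟨d1, u', hu1', hu2', d2, d3⟩
  all_goals try omega
  · -- i = 0, rest tail
    exact ⟨⟨0, hm⟩, t, u, u', by simp only [Fin.lt_def, Fin.val_mk]; omega, by simp only [Fin.lt_def, Fin.val_mk]; omega, by omega,
      by simp only [Fin.lt_def, Fin.val_mk]; omega, by simp only [Fin.lt_def, Fin.val_mk]; omega, by simp only [Fin.lt_def, Fin.val_mk]; omega⟩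
  · -- all tail
    exact ⟨s, t, u, u', by simp only [Fin.lt_def, Fin.val_mk]; omega, by simp only [Fin.lt_def, Fin.val_mk]; omega, by omega,
      by simp only [Fin.lt_def, Fin.val_mk]; omega, by simp only [Fin.lt_def, Fin.val_mk]; omega, by simp only [Fin.lt_def, Fin.val_mk]; omega⟩


/-- Embedding of σ-positions into π-positions. -/
def emb2 (hmn : m < n) (s : Fin m) : Fin n :=
  if (s : ℕ) = 0 then ⟨0, by omega⟩ else ⟨(s : ℕ) + (n - m), by have := s.isLt; omega⟩

lemma emb2_val (hmn : m < n) (s : Fin m) :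
    (emb2 hmn s : ℕ) = if (s : ℕ) = 0 then 0 else (s : ℕ) + (n - m) := by
  unfold emb2; split_ifs <;> rfl

lemma op2_emb2 (hm : 1 ≤ m) (hmn : m < n) (σ : Equiv.Perm (Fin m)) (s : Fin m) :
    (op2 hm hmn σ (emb2 hmn s) : ℕ) = (σ s : ℕ) := by
  rw [op2_apply]
  have hs := s.isLt
  by_cases h : (s : ℕ) = 0
  · rw [emb2, if_pos h]
    unfold op2f
    rw [dif_pos rfl]
    show ((σ ⟨0, hm⟩ : Fin m) : ℕ) = _
    exact congrArg Fin.val (congrArg σ (Fin.ext h.symm))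
  · rw [emb2, if_neg h]
    unfold op2f
    rw [dif_neg (show ¬ ((⟨(s : ℕ) + (n - m), by omega⟩ : Fin n) : ℕ) = 0 by simp; omega),
      dif_neg (show ¬ ((⟨(s : ℕ) + (n - m), by omega⟩ : Fin n) : ℕ) = 1 by simp; omega),
      dif_neg (show ¬ ((⟨(s : ℕ) + (n - m), by omega⟩ : Fin n) : ℕ) ≤ n - m by simp; omega)]
    show ((σ _ : Fin m) : ℕ) = _
    refine congrArg Fin.val (congrArg σ (Fin.ext ?_))
    show (s : ℕ) + (n - m) - (n - m) = (s : ℕ)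
    omega

lemma op2_213_fwd (hm : 1 ≤ m) (hmn : m < n) (σ : Equiv.Perm (Fin m)) :
    Contains213 σ → Contains213 (op2 hm hmn σ) := by
  rintro ⟨i, j, k, hij, hjk, h1, h2⟩
  rw [Fin.lt_def] at hij hjk h1 h2
  refine ⟨emb2 hmn i, emb2 hmn j, emb2 hmn k, ?_, ?_, ?_, ?_⟩ <;>
    (simp only [Fin.lt_def, emb2_val, op2_emb2]; first | omega | (split_ifs <;> omega))

lemma op2_1234_fwd (hm : 1 ≤ m) (hmn : m < n) (σ : Equiv.Perm (Fin m)) :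
    Contains1'2'34 σ → Contains1'2'34 (op2 hm hmn σ) := by
  rintro ⟨i, j, k, k', hij, hjk, hkk, h1, h2, h3⟩
  rw [Fin.lt_def] at hij hjk h1 h2 h3
  refine ⟨emb2 hmn i, emb2 hmn j, emb2 hmn k, emb2 hmn k', ?_, ?_, ?_, ?_, ?_, ?_⟩ <;>
    (simp only [Fin.lt_def, emb2_val, op2_emb2]; first | omega | (split_ifs <;> omega))


def op1f (hn : 1 ≤ n) (σ : Equiv.Perm (Fin (n - 1))) (p : Fin n) : Fin n :=
  if h0 : (p : ℕ) = 0 then ⟨n - 1, by omega⟩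
  else ⟨σ ⟨(p : ℕ) - 1, by have := p.isLt; omega⟩,
    lt_of_lt_of_le (σ ⟨(p : ℕ) - 1, by have := p.isLt; omega⟩).isLt (by omega)⟩

lemma op1f_cases (hn : 1 ≤ n) (σ : Equiv.Perm (Fin (n - 1))) (p : Fin n) :
    ((p : ℕ) = 0 ∧ (op1f hn σ p : ℕ) = n - 1) ∨
    (1 ≤ (p : ℕ) ∧ ∃ s : Fin (n - 1), (s : ℕ) = (p : ℕ) - 1 ∧
      (op1f hn σ p : ℕ) = (σ s : ℕ) ∧ (op1f hn σ p : ℕ) < n - 1) := by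
  unfold op1f
  split_ifs with h0
  · exact Or.inl ⟨h0, rfl⟩
  · have := p.isLt
    exact Or.inr ⟨by omega, ⟨(p : ℕ) - 1, by omega⟩, rfl, rfl, (σ _).isLt⟩

lemma op1f_inj (hn : 1 ≤ n) (σ : Equiv.Perm (Fin (n - 1))) :
    Function.Injective (op1f hn σ) := by
  intro p q hpq
  have hv : (op1f hn σ p : ℕ) = (op1f hn σ q : ℕ) := by rw [hpq]
  rcases op1f_cases hn σ p with ⟨e1, e2⟩ | ⟨e1, s, hs, e2, e3⟩ <;>
    rcases op1f_cases hn σ q with ⟨f1, f2⟩ | ⟨f1, t, ht, f2, f3⟩ <;> apply Fin.ext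
  · omega
  · omega
  · omega
  · have : s = t := σ.injective (Fin.ext (by omega))
    have : (s : ℕ) = (t : ℕ) := by rw [this]
    omega

noncomputable def op1 (hn : 1 ≤ n) (σ : Equiv.Perm (Fin (n - 1))) : Equiv.Perm (Fin n) :=
  Equiv.ofBijective _ (Finite.injective_iff_bijective.mp (op1f_inj hn σ))

lemma op1_apply (hn : 1 ≤ n) (σ : Equiv.Perm (Fin (n - 1))) (p : Fin n) :
    op1 hn σ p = op1f hn σ p := rfl

lemma op1_emb (hn : 1 ≤ n) (σ : Equiv.Perm (Fin (n - 1))) (s : Fin (n - 1)) :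
    (op1 hn σ (⟨(s : ℕ) + 1, by have := s.isLt; omega⟩ : Fin n) : ℕ) = (σ s : ℕ) := by
  rw [op1_apply]
  unfold op1f
  rw [dif_neg (show ¬ ((⟨(s : ℕ) + 1, by have := s.isLt; omega⟩ : Fin n) : ℕ) = 0 by simp)]
  show ((σ _ : Fin (n - 1)) : ℕ) = _
  refine congrArg Fin.val (congrArg σ (Fin.ext ?_))
  show (s : ℕ) + 1 - 1 = (s : ℕ)
  omega

lemma op1_213_fwd (hn : 1 ≤ n) (σ : Equiv.Perm (Fin (n - 1))) :
    Contains213 σ → Contains213 (op1 hn σ) := by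
  rintro ⟨i, j, k, hij, hjk, h1, h2⟩
  rw [Fin.lt_def] at hij hjk h1 h2
  have hi := i.isLt; have hj := j.isLt; have hk := k.isLt
  exact ⟨⟨(i : ℕ) + 1, by omega⟩, ⟨(j : ℕ) + 1, by omega⟩, ⟨(k : ℕ) + 1, by omega⟩,
    by simp only [Fin.lt_def]; omega, by simp only [Fin.lt_def]; omega,
    by simp only [Fin.lt_def, op1_emb]; omega, by simp only [Fin.lt_def, op1_emb]; omega⟩

lemma op1_1234_fwd (hn : 1 ≤ n) (σ : Equiv.Perm (Fin (n - 1))) :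
    Contains1'2'34 σ → Contains1'2'34 (op1 hn σ) := by
  rintro ⟨i, j, k, k', hij, hjk, hkk, h1, h2, h3⟩
  rw [Fin.lt_def] at hij hjk h1 h2 h3
  have hi := i.isLt; have hj := j.isLt; have hk := k.isLt; have hk' := k'.isLt
  exact ⟨⟨(i : ℕ) + 1, by omega⟩, ⟨(j : ℕ) + 1, by omega⟩, ⟨(k : ℕ) + 1, by omega⟩,
    ⟨(k' : ℕ) + 1, by omega⟩,
    by simp only [Fin.lt_def]; omega, by simp only [Fin.lt_def]; omega, by show (k':ℕ)+1 = (k:ℕ)+1+1; omega,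
    by simp only [Fin.lt_def, op1_emb]; omega, by simp only [Fin.lt_def, op1_emb]; omega,
    by simp only [Fin.lt_def, op1_emb]; omega⟩

lemma op1_213_rev (hn : 1 ≤ n) (σ : Equiv.Perm (Fin (n - 1))) :
    Contains213 (op1 hn σ) → Contains213 σ := by
  rintro ⟨i, j, k, hij, hjk, h1, h2⟩
  rw [Fin.lt_def] at hij hjk h1 h2
  simp only [op1_apply] at h1 h2
  rcases op1f_cases hn σ i with ⟨e1, e2⟩ | ⟨e1, s, hs, e2, e3⟩ <;>
    rcases op1f_cases hn σ j with ⟨f1, f2⟩ | ⟨f1, t, ht, f2, f3⟩ <;>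
      rcases op1f_cases hn σ k with ⟨g1, g2⟩ | ⟨g1, u, hu, g2, g3⟩
  all_goals try omega
  exact ⟨s, t, u, by simp only [Fin.lt_def]; omega, by simp only [Fin.lt_def]; omega,
    by simp only [Fin.lt_def]; omega, by simp only [Fin.lt_def]; omega⟩

lemma op1_1234_rev (hn : 1 ≤ n) (σ : Equiv.Perm (Fin (n - 1))) :
    Contains1'2'34 (op1 hn σ) → Contains1'2'34 σ := by
  rintro ⟨i, j, k, k', hij, hjk, hkk, h1, h2, h3⟩
  rw [Fin.lt_def] at hij hjk h1 h2 h3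
  simp only [op1_apply] at h1 h2 h3
  rcases op1f_cases hn σ i with ⟨e1, e2⟩ | ⟨e1, s, hs, e2, e3⟩ <;>
    rcases op1f_cases hn σ j with ⟨f1, f2⟩ | ⟨f1, t, ht, f2, f3⟩ <;>
      rcases op1f_cases hn σ k with ⟨g1, g2⟩ | ⟨g1, u, hu, g2, g3⟩ <;>
        rcases op1f_cases hn σ k' with ⟨d1, d2⟩ | ⟨d1, u', hu', d2, d3⟩
  all_goals try omega
  exact ⟨s, t, u, u', by simp only [Fin.lt_def]; omega, by simp only [Fin.lt_def]; omega,
    by omega,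
    by simp only [Fin.lt_def]; omega, by simp only [Fin.lt_def]; omega,
    by simp only [Fin.lt_def]; omega⟩


/-- Proof-irrelevant one-line notation. -/
def Pv {n : ℕ} (π : Equiv.Perm (Fin n)) (p : ℕ) : ℕ :=
  if h : p < n then (π ⟨p, h⟩ : ℕ) else n

lemma Pv_def {n : ℕ} (π : Equiv.Perm (Fin n)) {p : ℕ} (h : p < n) :
    Pv π p = (π ⟨p, h⟩ : ℕ) := dif_pos h

lemma Pv_fin {n : ℕ} (π : Equiv.Perm (Fin n)) (p : Fin n) : Pv π (p : ℕ) = (π p : ℕ) := by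
  rw [Pv_def π p.isLt]

lemma Pv_lt {n : ℕ} (π : Equiv.Perm (Fin n)) {p : ℕ} (h : p < n) : Pv π p < n := by
  rw [Pv_def π h]; exact (π _).isLt

lemma Pv_inj {n : ℕ} (π : Equiv.Perm (Fin n)) {p q : ℕ} (hp : p < n) (hq : q < n)
    (h : Pv π p = Pv π q) : p = q := by
  rw [Pv_def π hp, Pv_def π hq] at h
  have := π.injective (Fin.ext h)
  simpa using congrArg Fin.val this

lemma Pv_surj {n : ℕ} (π : Equiv.Perm (Fin n)) {v : ℕ} (hv : v < n) :
    ∃ p, p < n ∧ Pv π p = v := by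
  refine ⟨π.symm ⟨v, hv⟩, (π.symm _).isLt, ?_⟩
  rw [Pv_def π (π.symm _).isLt]
  simp

lemma perm_ext_pv {n : ℕ} (π τ : Equiv.Perm (Fin n)) (h : ∀ p, p < n → Pv π p = Pv τ p) :
    π = τ := by
  apply Equiv.ext
  intro p
  apply Fin.ext
  have := h p p.isLt
  rwa [Pv_fin, Pv_fin] at this

lemma no213 {n : ℕ} {π : Equiv.Perm (Fin n)} (h : ¬ Contains213 π) {p q r : ℕ}
    (hpq : p < q) (hqr : q < r) (hr : r < n) (h1 : Pv π q < Pv π p) (h2 : Pv π p < Pv π r) :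
    False := by
  have hp : p < n := by omega
  have hq : q < n := by omega
  simp only [Pv_def π hp, Pv_def π hq, Pv_def π hr] at h1 h2
  exact h ⟨⟨p, hp⟩, ⟨q, hq⟩, ⟨r, hr⟩, by simp [Fin.lt_def]; omega, by simp [Fin.lt_def]; omega,
    by rw [Fin.lt_def]; exact h1, by rw [Fin.lt_def]; exact h2⟩

lemma no1234 {n : ℕ} {π : Equiv.Perm (Fin n)} (h : ¬ Contains1'2'34 π) {p q r : ℕ}
    (hpq : p < q) (hqr : q < r) (hr : r + 1 < n)
    (h1 : Pv π p < Pv π q) (h2 : Pv π q < Pv π r) (h3 : Pv π r < Pv π (r + 1)) : False := by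
  have hp : p < n := by omega
  have hq : q < n := by omega
  have hr' : r < n := by omega
  simp only [Pv_def π hp, Pv_def π hq, Pv_def π hr', Pv_def π hr] at h1 h2 h3
  exact h ⟨⟨p, hp⟩, ⟨q, hq⟩, ⟨r, hr'⟩, ⟨r + 1, hr⟩, by simp [Fin.lt_def]; omega,
    by simp [Fin.lt_def]; omega, by simp,
    by rw [Fin.lt_def]; exact h1, by rw [Fin.lt_def]; exact h2, by rw [Fin.lt_def]; exact h3⟩


noncomputable def mkPerm (m : ℕ) (f : ℕ → ℕ) (hf : ∀ s, s < m → f s < m)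
    (hinj : ∀ s, s < m → ∀ t, t < m → f s = f t → s = t) : Equiv.Perm (Fin m) :=
  Equiv.ofBijective (fun s => ⟨f s, hf s s.isLt⟩)
    (Finite.injective_iff_bijective.mp (fun s t h => by
      apply Fin.ext
      exact hinj s s.isLt t t.isLt (congrArg Fin.val h)))

lemma mkPerm_apply (m : ℕ) (f : ℕ → ℕ) (hf : ∀ s, s < m → f s < m)
    (hinj : ∀ s, s < m → ∀ t, t < m → f s = f t → s = t) (s : Fin m) :
    ((mkPerm m f hf hinj) s : ℕ) = f s := rfl

lemma classify {n : ℕ} (π : Equiv.Perm (Fin n)) (h34 : ¬ Contains1'2'34 π)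
    (h213 : ¬ Contains213 π) (hn : 1 ≤ n) (h0 : Pv π 0 ≠ n - 1) :
    ∃ (m : ℕ) (hm : 1 ≤ m) (hmn : m < n) (σ : Equiv.Perm (Fin m)),
      π = op2 hm hmn σ ∧ Pv π 1 = m := by
  obtain ⟨q, hqn, hq⟩ := Pv_surj π (show n - 1 < n by omega)
  have hq0 : q ≠ 0 := fun e => h0 (by rw [← e]; exact hq)
  -- the prefix before the max is increasing, and max is at position 1 or 2
  have hq2 : q ≤ 2 := by
    by_contra hgt
    push_neg at hgt
    obtain ⟨r, rfl⟩ : ∃ r, q = r + 1 := ⟨q - 1, by omega⟩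
    have p0 : Pv π 0 < n := Pv_lt π (by omega)
    have p1 : Pv π 1 < n := Pv_lt π (by omega)
    have pr : Pv π r < n := Pv_lt π (by omega)
    have ne01 : Pv π 0 ≠ Pv π 1 := fun e => by have := Pv_inj π (by omega) (by omega) e; omega
    have ne1q : Pv π 1 ≠ Pv π (r+1) := fun e => by have := Pv_inj π (by omega) (by omega) e; omega
    have ne0q : Pv π 0 ≠ Pv π (r+1) := fun e => by have := Pv_inj π (by omega) (by omega) e; omega
    have h01 : Pv π 0 < Pv π 1 := by
      rcases Nat.lt_or_ge (Pv π 0) (Pv π 1) with h | h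
      · exact h
      · exact absurd (no213 h213 (show (0:ℕ) < 1 by omega) (show 1 < r+1 by omega) hqn
          (by omega) (by omega)) (fun e => e)
    have ne1r : Pv π 1 ≠ Pv π r := fun e => by have := Pv_inj π (by omega) (by omega) e; omega
    have h1r : Pv π 1 < Pv π r := by
      rcases Nat.lt_or_ge (Pv π 1) (Pv π r) with h | h
      · exact h
      · exact absurd (no213 h213 (show (1:ℕ) < r by omega) (show r < r+1 by omega) hqn
          (by omega) (by omega)) (fun e => e)
    have nerq : Pv π r ≠ Pv π (r+1) := fun e => by have := Pv_inj π (by omega) (by omega) e; omega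
    exact no1234 h34 (show (0:ℕ) < 1 by omega) (show 1 < r by omega) hqn
      h01 h1r (by omega)
  interval_cases q
  · exact absurd rfl hq0
  · -- max at position 1 : m = n - 1
    have hn2 : 2 ≤ n := by omega
    have hm : 1 ≤ n - 1 := by omega
    have hmn : n - 1 < n := by omega
    have small : ∀ p, p < n → p ≠ 1 → Pv π p < n - 1 := by
      intro p hp hne
      have hlt := Pv_lt π hp
      rcases Nat.lt_or_ge (Pv π p) (n-1) with h | h
      · exact h
      · have : Pv π p = Pv π 1 := by omega
        exact absurd (Pv_inj π hp (by omega) this) hne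
    set f : ℕ → ℕ := fun s => if s = 0 then Pv π 0 else Pv π (s + 1) with hfdef
    have hf : ∀ s, s < n - 1 → f s < n - 1 := by
      intro s hs
      simp only [hfdef]
      split_ifs
      · exact small 0 (by omega) (by omega)
      · exact small (s+1) (by omega) (by omega)
    have hinj : ∀ s, s < n - 1 → ∀ t, t < n - 1 → f s = f t → s = t := by
      intro s hs t ht h
      simp only [hfdef] at h
      split_ifs at h with c1 c2 c3
      · omega
      · have := Pv_inj π (by omega) (by omega) h; omega
      · have := Pv_inj π (by omega) (by omega) h; omega
      · have := Pv_inj π (by omega) (by omega) h; omega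
    refine ⟨n - 1, hm, hmn, mkPerm (n-1) f hf hinj, ?_, by omega⟩
    apply perm_ext_pv
    intro p hp
    have hR : Pv (op2 hm hmn (mkPerm (n-1) f hf hinj)) p
        = (op2f hm hmn (mkPerm (n-1) f hf hinj) ⟨p, hp⟩ : ℕ) := by
      rw [Pv_def _ hp, op2_apply]
    rw [hR]
    rcases op2f_cases hm hmn (mkPerm (n-1) f hf hinj) ⟨p, hp⟩ with
      ⟨e1, e2, e3⟩ | ⟨e1, e2⟩ | ⟨e1, e1', e2⟩ | ⟨e1, s, hs1, hs2, e2, e3⟩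
    · -- p = 0
      simp only [Fin.val_mk] at e1
      have h6 : ((mkPerm (n-1) f hf hinj) ⟨0, hm⟩ : ℕ) = Pv π 0 := by
        rw [mkPerm_apply]; simp [hfdef]
      have hPp : Pv π p = Pv π 0 := by rw [e1]
      omega
    · -- p = 1
      simp only [Fin.val_mk] at e1
      have hPp : Pv π p = Pv π 1 := by rw [e1]
      omega
    · simp only [Fin.val_mk] at e1 e1'
      omega
    · -- tail
      simp only [Fin.val_mk] at e1 hs2
      have h5 : ¬ ((s : ℕ) = 0) := by omega
      have h6 : ((mkPerm (n-1) f hf hinj) s : ℕ) = Pv π ((s : ℕ) + 1) := by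
        rw [mkPerm_apply]; simp only [hfdef]
        rw [if_neg h5]
      have h7 : (s : ℕ) + 1 = p := by omega
      rw [h7] at h6
      omega
  · -- max at position 2 : m = value at position 1
    have hn3 : 3 ≤ n := by omega
    have p0 : Pv π 0 < n := Pv_lt π (by omega)
    have p1 : Pv π 1 < n := Pv_lt π (by omega)
    have ne01 : Pv π 0 ≠ Pv π 1 := fun e => by have := Pv_inj π (by omega) (by omega) e; omega
    have ne0q : Pv π 0 ≠ n - 1 := h0
    have ne1q : Pv π 1 ≠ n - 1 := fun e => by
      have := Pv_inj π (by omega) (by omega) (e.trans hq.symm); omega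
    have h01 : Pv π 0 < Pv π 1 := by
      rcases Nat.lt_or_ge (Pv π 0) (Pv π 1) with h | h
      · exact h
      · exact absurd (no213 h213 (show (0:ℕ) < 1 by omega) (show (1:ℕ) < 2 by omega) hqn
          (by omega) (by omega)) (fun e => e)
    set m := Pv π 1 with hmdef
    have hm : 1 ≤ m := by omega
    have hmn : m < n := by omega
    have star : ∀ p, 2 ≤ p → p + 1 < n → m < Pv π (p+1) →
        Pv π (p+1) < Pv π p ∧ m < Pv π p := by
      intro p hp2 hpn hv
      have pp : Pv π p < n := Pv_lt π (by omega)
      have pp1 : Pv π (p+1) < n := Pv_lt π (by omega)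
      have nep : Pv π p ≠ Pv π (p+1) := fun e => by
        have := Pv_inj π (by omega) (by omega) e; omega
      have nepm : Pv π p ≠ m := fun e => by
        have := Pv_inj π (by omega) (show (1:ℕ) < n by omega) e; omega
      rcases Nat.lt_or_ge (Pv π p) (Pv π (p+1)) with h | h
      · rcases Nat.lt_or_ge (Pv π p) m with h2 | h2
        · exact absurd (no213 h213 (show (1:ℕ) < p by omega) (show p < p + 1 by omega)
            (by omega) (by omega) (by omega)) (fun e => e)
        · exact absurd (no1234 h34 (show (0:ℕ) < 1 by omega) (show 1 < p by omega)
            (by omega) (by omega) (by omega) (by omega)) (fun e => e)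
      · constructor
        · omega
        · omega
    have run : ∀ t, ∀ t', 1 ≤ t' → t' ≤ t → t' + m + 1 ≤ n → Pv π (1 + t') = n - t' := by
      intro t
      induction t with
      | zero => intro t' h1 h2 h3; omega
      | succ t ih =>
        intro t' h1 h2 h3
        rcases Nat.lt_or_ge t' (t+1) with hlt | hge
        · exact ih t' h1 (by omega) h3
        · have ht' : t' = t + 1 := by omega
          subst ht'
          rcases Nat.eq_or_lt_of_le h1 with h1' | h1'
          · rw [← h1']
            rw [← h1'] at h3
            have : (1 : ℕ) + 1 = 2 := rfl
            rw [this]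
            omega
          · -- t + 1 ≥ 2, i.e. t ≥ 1
            obtain ⟨w, hwn, hw⟩ := Pv_surj π (show n - (t+1) < n by omega)
            have hw0 : w ≠ 0 := fun e => by rw [e] at hw; omega
            have hw1 : w ≠ 1 := fun e => by rw [e] at hw; omega
            have hwbig : ∀ s, 1 ≤ s → s ≤ t → w ≠ 1 + s := by
              intro s hs1 hs2 he
              have := ih s hs1 hs2 (by omega)
              rw [← he] at this
              omega
            have hwge : 2 + t ≤ w := by
              by_contra hc
              push_neg at hc
              rcases Nat.lt_or_ge w 2 with hc2 | hc2
              · interval_cases w <;> simp_all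
              · exact hwbig (w - 1) (by omega) (by omega) (by omega)
            rcases Nat.eq_or_lt_of_le hwge with he | hlt2
            · rw [← he] at hw
              have : 1 + (t + 1) = 2 + t := by omega
              rw [this]
              exact hw
            · -- w > 2 + t : contradiction
              exfalso
              obtain ⟨w', rfl⟩ : ∃ w', w = w' + 1 := ⟨w - 1, by omega⟩
              have hst := star w' (by omega) (by omega) (by omega)
              have pw' : Pv π w' < n := Pv_lt π (by omega)
              -- Pv π w' ∈ [n - t, n - 1], so it equals Pv π (1 + s'') for s'' = n - Pv π w'
              have hs'' := ih (n - Pv π w') (by omega) (by omega) (by omega)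
              have := Pv_inj π (show 1 + (n - Pv π w') < n by omega) (show w' < n by omega)
                (by omega)
              omega
    have small : ∀ p, p < n → (p = 0 ∨ n - m < p) → Pv π p < m := by
      intro p hp hcase
      have hlt := Pv_lt π hp
      by_contra hc
      push_neg at hc
      rcases Nat.eq_or_lt_of_le hc with he | hgt
      · have := Pv_inj π (show (1:ℕ) < n by omega) hp he
        omega
      · have ht := run (n - Pv π p) (n - Pv π p) (by omega) (by omega) (by omega)
        have := Pv_inj π (show 1 + (n - Pv π p) < n by omega) hp (by omega)
        omega
    set f : ℕ → ℕ := fun s => if s = 0 then Pv π 0 else Pv π (s + (n - m)) with hfdef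
    have hf : ∀ s, s < m → f s < m := by
      intro s hs
      simp only [hfdef]
      split_ifs
      · exact small 0 (by omega) (by omega)
      · exact small (s + (n - m)) (by omega) (by omega)
    have hinj : ∀ s, s < m → ∀ t, t < m → f s = f t → s = t := by
      intro s hs t ht h
      simp only [hfdef] at h
      split_ifs at h with c1 c2 c3
      · omega
      · have := Pv_inj π (by omega) (by omega) h; omega
      · have := Pv_inj π (by omega) (by omega) h; omega
      · have := Pv_inj π (by omega) (by omega) h; omega
    refine ⟨m, hm, hmn, mkPerm m f hf hinj, ?_, rfl⟩
    apply perm_ext_pv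
    intro p hp
    have hR : Pv (op2 hm hmn (mkPerm m f hf hinj)) p
        = (op2f hm hmn (mkPerm m f hf hinj) ⟨p, hp⟩ : ℕ) := by
      rw [Pv_def _ hp, op2_apply]
    rw [hR]
    rcases op2f_cases hm hmn (mkPerm m f hf hinj) ⟨p, hp⟩ with
      ⟨e1, e2, e3⟩ | ⟨e1, e2⟩ | ⟨e1, e1', e2⟩ | ⟨e1, s, hs1, hs2, e2, e3⟩
    · -- p = 0
      simp only [Fin.val_mk] at e1
      have h6 : ((mkPerm m f hf hinj) ⟨0, hm⟩ : ℕ) = Pv π 0 := by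
        rw [mkPerm_apply]; simp [hfdef]
      have hPp : Pv π p = Pv π 0 := by rw [e1]
      omega
    · -- p = 1
      simp only [Fin.val_mk] at e1
      have hPp : Pv π p = Pv π 1 := by rw [e1]
      omega
    · -- mid : 2 ≤ p ≤ n - m
      simp only [Fin.val_mk] at e1 e1' e2
      have hrun := run (p - 1) (p - 1) (by omega) (by omega) (by omega)
      have hpe : 1 + (p - 1) = p := by omega
      rw [hpe] at hrun
      omega
    · -- tail
      simp only [Fin.val_mk] at e1 hs2
      have h5 : ¬ ((s : ℕ) = 0) := by omega
      have h6 : ((mkPerm m f hf hinj) s : ℕ) = Pv π ((s : ℕ) + (n - m)) := by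
        rw [mkPerm_apply]; simp only [hfdef]
        rw [if_neg h5]
      have h7 : (s : ℕ) + (n - m) = p := by omega
      rw [h7] at h6
      omega


lemma classify0 {n : ℕ} (π : Equiv.Perm (Fin n)) (hn : 1 ≤ n) (h0 : Pv π 0 = n - 1) :
    ∃ σ : Equiv.Perm (Fin (n - 1)), π = op1 hn σ := by
  have small : ∀ p, p < n → p ≠ 0 → Pv π p < n - 1 := by
    intro p hp hne
    have hlt := Pv_lt π hp
    rcases Nat.lt_or_ge (Pv π p) (n-1) with h | h
    · exact h
    · have : Pv π p = Pv π 0 := by omega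
      exact absurd (Pv_inj π hp (by omega) this) hne
  set f : ℕ → ℕ := fun s => Pv π (s + 1) with hfdef
  have hf : ∀ s, s < n - 1 → f s < n - 1 := by
    intro s hs
    exact small (s+1) (by omega) (by omega)
  have hinj : ∀ s, s < n - 1 → ∀ t, t < n - 1 → f s = f t → s = t := by
    intro s hs t ht h
    simp only [hfdef] at h
    have := Pv_inj π (by omega) (by omega) h; omega
  refine ⟨mkPerm (n-1) f hf hinj, ?_⟩
  apply perm_ext_pv
  intro p hp
  have hR : Pv (op1 hn (mkPerm (n-1) f hf hinj)) p
      = (op1f hn (mkPerm (n-1) f hf hinj) ⟨p, hp⟩ : ℕ) := by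
    rw [Pv_def _ hp, op1_apply]
  rw [hR]
  rcases op1f_cases hn (mkPerm (n-1) f hf hinj) ⟨p, hp⟩ with ⟨e1, e2⟩ | ⟨e1, s, hs, e2, e3⟩
  · simp only [Fin.val_mk] at e1
    have hPp : Pv π p = Pv π 0 := by rw [e1]
    omega
  · simp only [Fin.val_mk] at e1 hs
    have h6 : ((mkPerm (n-1) f hf hinj) s : ℕ) = Pv π ((s : ℕ) + 1) := by
      rw [mkPerm_apply]
    have h7 : (s : ℕ) + 1 = p := by omega
    rw [h7] at h6
    omega

lemma Pv_op1_zero {n : ℕ} (hn : 1 ≤ n) (σ : Equiv.Perm (Fin (n - 1))) :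
    Pv (op1 hn σ) 0 = n - 1 := by
  rw [Pv_def _ (show 0 < n by omega), op1_apply]
  unfold op1f
  rw [dif_pos rfl]

lemma Pv_op2_zero {n m : ℕ} (hm : 1 ≤ m) (hmn : m < n) (σ : Equiv.Perm (Fin m)) :
    Pv (op2 hm hmn σ) 0 = (σ ⟨0, hm⟩ : ℕ) := by
  rw [Pv_def _ (show 0 < n by omega), op2_apply]
  unfold op2f
  rw [dif_pos rfl]

lemma Pv_op2_one {n m : ℕ} (hm : 1 ≤ m) (hmn : m < n) (σ : Equiv.Perm (Fin m)) (h1 : 1 < n) :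
    Pv (op2 hm hmn σ) 1 = m := by
  rw [Pv_def _ h1, op2_apply]
  unfold op2f
  rw [dif_neg (by simp), dif_pos rfl]

lemma op1_inj {n : ℕ} (hn : 1 ≤ n) : Function.Injective (op1 (n := n) hn) := by
  intro σ σ' h
  apply Equiv.ext
  intro s
  apply Fin.ext
  have h1 := op1_emb hn σ s
  have h2 := op1_emb hn σ' s
  rw [h] at h1
  rw [← h1, h2]

lemma op2_inj {n m : ℕ} (hm : 1 ≤ m) (hmn : m < n) :
    Function.Injective (op2 (n := n) hm hmn) := by
  intro σ σ' h
  apply Equiv.ext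
  intro s
  apply Fin.ext
  have h1 := op2_emb2 hm hmn σ s
  have h2 := op2_emb2 hm hmn σ' s
  rw [h] at h1
  rw [← h1, h2]

open scoped Classical in
noncomputable def A (n : ℕ) : Finset (Equiv.Perm (Fin n)) :=
  Finset.univ.filter (fun π => ¬ Contains1'2'34 π ∧ ¬ Contains213 π)

open scoped Classical in
lemma mem_A {n : ℕ} (π : Equiv.Perm (Fin n)) :
    π ∈ A n ↔ ¬ Contains1'2'34 π ∧ ¬ Contains213 π := by
  simp [A]

open scoped Classical in
lemma card_top {n : ℕ} (hn : 1 ≤ n) :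
    ((A n).filter (fun π => Pv π 0 = n - 1)).card = (A (n - 1)).card := by
  symm
  apply Finset.card_bij (i := fun σ _ => op1 hn σ)
  · intro σ hσ
    rw [mem_A] at hσ
    rw [Finset.mem_filter, mem_A]
    exact ⟨⟨fun hc => hσ.1 (op1_1234_rev hn σ hc), fun hc => hσ.2 (op1_213_rev hn σ hc)⟩,
      Pv_op1_zero hn σ⟩
  · intro σ1 h1 σ2 h2 e
    exact op1_inj hn e
  · intro π hπ
    rw [Finset.mem_filter, mem_A] at hπ
    obtain ⟨σ, hσ⟩ := classify0 π hn hπ.2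
    refine ⟨σ, ?_, hσ.symm⟩
    rw [mem_A]
    constructor
    · intro hc
      exact hπ.1.1 (hσ ▸ op1_1234_fwd hn σ hc)
    · intro hc
      exact hπ.1.2 (hσ ▸ op1_213_fwd hn σ hc)

open scoped Classical in
lemma card_rest {n : ℕ} (hn : 1 ≤ n) :
    ((A n).filter (fun π => ¬ Pv π 0 = n - 1)).card
      = ∑ m ∈ Finset.Icc 1 (n - 1), (A m).card := by
  have hsplit : (A n).filter (fun π => ¬ Pv π 0 = n - 1)
      = (Finset.Icc 1 (n - 1)).biUnion
          (fun m => (A n).filter (fun π => ¬ Pv π 0 = n - 1 ∧ Pv π 1 = m)) := by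
    apply Finset.ext
    intro π
    simp only [Finset.mem_filter, Finset.mem_biUnion, Finset.mem_Icc]
    constructor
    · rintro ⟨hmem, h0⟩
      have hA := (mem_A π).mp hmem
      obtain ⟨m, hm, hmn, σ, hπ, h1⟩ := classify π hA.1 hA.2 hn h0
      exact ⟨m, ⟨hm, by omega⟩, hmem, h0, h1⟩
    · rintro ⟨m, _, hmem, h0, _⟩
      exact ⟨hmem, h0⟩
  rw [hsplit, Finset.card_biUnion]
  · apply Finset.sum_congr rfl
    intro m hm
    rw [Finset.mem_Icc] at hm
    have hm1 : 1 ≤ m := hm.1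
    have hmn : m < n := by omega
    have h1n : 1 < n := by omega
    symm
    apply Finset.card_bij (i := fun σ _ => op2 hm1 hmn σ)
    · intro σ hσ
      rw [mem_A] at hσ
      rw [Finset.mem_filter, mem_A]
      refine ⟨⟨fun hc => hσ.1 (op2_1234_rev hm1 hmn σ hc),
        fun hc => hσ.2 (op2_213_rev hm1 hmn σ hc)⟩, ?_, Pv_op2_one hm1 hmn σ h1n⟩
      rw [Pv_op2_zero hm1 hmn σ]
      have := (σ ⟨0, hm1⟩).isLt
      omega
    · intro σ1 h1 σ2 h2 e
      exact op2_inj hm1 hmn e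
    · intro π hπ
      rw [Finset.mem_filter, mem_A] at hπ
      obtain ⟨hA, h0, h1⟩ := hπ
      obtain ⟨m', hm', hmn', σ, hπeq, h1'⟩ := classify π hA.1 hA.2 hn h0
      have hmm : m' = m := by omega
      subst hmm
      refine ⟨σ, ?_, hπeq.symm⟩
      rw [mem_A]
      constructor
      · intro hc
        exact hA.1 (hπeq ▸ op2_1234_fwd hm' hmn' σ hc)
      · intro hc
        exact hA.2 (hπeq ▸ op2_213_fwd hm' hmn' σ hc)
  · intro x hx y hy hxy
    rw [Function.onFun, Finset.disjoint_left]
    intro π hπx hπy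
    rw [Finset.mem_filter] at hπx hπy
    exact hxy (hπx.2.2 ▸ hπy.2.2 ▸ rfl)

open scoped Classical in
lemma card_rec {n : ℕ} (hn : 1 ≤ n) :
    (A n).card = (A (n - 1)).card + ∑ m ∈ Finset.Icc 1 (n - 1), (A m).card := by
  rw [← card_top hn, ← card_rest hn]
  exact (Finset.card_filter_add_card_filter_not (s := A n)
    (p := fun π => Pv π 0 = n - 1)).symm

open scoped Classical in
lemma card_A_one : (A 1).card = 1 := by
  have : A 1 = Finset.univ := by
    apply Finset.ext
    intro π
    simp only [Finset.mem_univ, iff_true, mem_A]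
    constructor
    · rintro ⟨i, j, k, k', hij, hjk, _, _⟩
      rw [Fin.lt_def] at hij hjk
      have := i.isLt; have := j.isLt; have := k.isLt
      omega
    · rintro ⟨i, j, k, hij, hjk, _, _⟩
      rw [Fin.lt_def] at hij hjk
      have := i.isLt; have := j.isLt; have := k.isLt
      omega
  rw [this, Finset.card_univ]
  simp

lemma sum_fib_odd (k : ℕ) : ∑ m ∈ Finset.Icc 1 k, Nat.fib (2 * m - 1) = Nat.fib (2 * k) := by
  induction k with
  | zero => simp
  | succ k ih =>
    rw [Finset.sum_Icc_succ_top (by omega), ih]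
    have h1 : 2 * (k + 1) - 1 = 2 * k + 1 := by omega
    have h2 : 2 * (k + 1) = 2 * k + 2 := by omega
    rw [h1, h2, Nat.fib_add_two]

open scoped Classical in
lemma card_A_fib : ∀ n, 1 ≤ n → (A n).card = Nat.fib (2 * n - 1) := by
  intro n
  induction n using Nat.strong_induction_on with
  | _ n ih =>
    intro hn
    rcases Nat.eq_or_lt_of_le hn with h1 | h1
    · rw [← h1, card_A_one]
      rfl
    · have h2 : 2 ≤ n := h1
      rw [card_rec hn]
      rw [ih (n-1) (by omega) (by omega)]
      have hs : ∑ m ∈ Finset.Icc 1 (n - 1), (A m).card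
          = ∑ m ∈ Finset.Icc 1 (n - 1), Nat.fib (2 * m - 1) := by
        apply Finset.sum_congr rfl
        intro m hm
        rw [Finset.mem_Icc] at hm
        exact ih m (by omega) hm.1
      rw [hs, sum_fib_odd (n-1)]
      have e1 : 2 * (n - 1) - 1 = 2 * n - 3 := by omega
      have e2 : 2 * (n - 1) = 2 * n - 2 := by omega
      have e3 : 2 * n - 1 = (2 * n - 3) + 2 := by omega
      rw [e1, e2, e3, Nat.fib_add_two]
      have e4 : 2 * n - 3 + 1 = 2 * n - 2 := by omega
      rw [e4, Nat.add_comm]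

end Stmt16

theorem stmt16 (n : ℕ) (hn : 1 ≤ n) :
    Nat.card {π : Equiv.Perm (Fin n) // ¬ Contains1'2'34 π ∧ ¬ Contains213 π}
      = Nat.fib (2 * n - 1) := by
  classical
  rw [← Stmt16.card_A_fib n hn, Nat.card_eq_fintype_card, Fintype.card_subtype]
  congr 1
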